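/- In the setting of the Squier complex of an inverse monoid presentation, for each idempotent e of T, the set star_e^⋈ = {e ▷ α ◁ e : α a path with αd = e} in the fundamental groupoid π(Sq(P),T) is a group under the operation ∗, with identity 1_e, where the inverse of α is (αr)⁻¹ ▷ α° ◁ (αd)⁻¹ (here ° denotes the groupoid inverse and ⁻¹ the inverse in T). -/
import Mathlib


/-- An inverse monoid. -/
class InverseMonoid (M : Type*) extends Monoid M, Inv M where
  mul_inv_mul : ∀ a : M, a * a⁻¹ * a = a
  inv_mul_inv : ∀ a : M, a⁻¹ * a * a⁻¹ = a⁻¹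
  idem_comm : ∀ e f : M, e * e = e → f * f = f → e * f = f * e

/-- A semiregular groupoid: a groupoid (given algebraically by its set of arrows `G`
over a vertex monoid `V`, with totalised composition `comp` whose axioms are guarded by
the composability condition `r α = d β`) together with left and right actions of the
vertex monoid `V` on arrows, satisfying the axioms of Definition 2.1. -/
structure SemiregularGroupoid (V : Type*) [Monoid V] (G : Type*) where
  d : G → V
  r : G → V
  comp : G → G → G
  id : V → G
  inv : G → G
  d_id : ∀ v, d (id v) = v
  r_id : ∀ v, r (id v) = v
  d_comp : ∀ α β, r α = d β → d (comp α β) = d α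
  r_comp : ∀ α β, r α = d β → r (comp α β) = r β
  comp_assoc : ∀ α β γ, r α = d β → r β = d γ →
    comp (comp α β) γ = comp α (comp β γ)
  id_comp : ∀ α, comp (id (d α)) α = α
  comp_id : ∀ α, comp α (id (r α)) = α
  d_inv : ∀ α, d (inv α) = r α
  r_inv : ∀ α, r (inv α) = d α
  comp_inv : ∀ α, comp α (inv α) = id (d α)
  inv_comp : ∀ α, comp (inv α) α = id (r α)
  actL : V → G → G
  actR : G → V → G
  actL_mul : ∀ x y α, actL (x * y) α = actL x (actL y α)
  actR_mul : ∀ α x y, actR α (x * y) = actR (actR α x) y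
  actL_actR : ∀ x α y, actR (actL x α) y = actL x (actR α y)
  one_actL : ∀ α, actL 1 α = α
  actR_one : ∀ α, actR α 1 = α
  d_actL : ∀ x α, d (actL x α) = x * d α
  d_actR : ∀ α x, d (actR α x) = d α * x
  r_actL : ∀ x α, r (actL x α) = x * r α
  r_actR : ∀ α x, r (actR α x) = r α * x
  actL_comp : ∀ x α β, r α = d β → actL x (comp α β) = comp (actL x α) (actL x β)
  actR_comp : ∀ α β x, r α = d β → actR (comp α β) x = comp (actR α x) (actR β x)
  actL_id : ∀ x y, actL x (id y) = id (x * y)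
  actR_id : ∀ x y, actR (id x) y = id (x * y)

/-- The operation `α ∗ β = (α ◁ βd) ∘ (αr ▷ β)`. -/
def SemiregularGroupoid.star {V : Type*} [Monoid V] {G : Type*}
    (S : SemiregularGroupoid V G) (α β : G) : G :=
  S.comp (S.actR α (S.d β)) (S.actL (S.r α) β)

/-- The operation `α ⊛ β = (αd ▷ β) ∘ (α ◁ βr)`. -/
def SemiregularGroupoid.ostar {V : Type*} [Monoid V] {G : Type*}
    (S : SemiregularGroupoid V G) (α β : G) : G :=
  S.comp (S.actL (S.d α) β) (S.actR α (S.r β))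

/-- `star_e^⋈(G) = {e ▷ α ◁ e : αd = e}`. -/
def bowtieStar {V : Type*} [InverseMonoid V] {G : Type*}
    (S : SemiregularGroupoid V G) (e : V) : Set G :=
  {γ | ∃ α : G, S.d α = e ∧ γ = S.actL e (S.actR α e)}

/-- `π_e^⋈(G) = {α ∈ star_e^⋈(G) : αr = e}`. -/
def bowtiePi {V : Type*} [InverseMonoid V] {G : Type*}
    (S : SemiregularGroupoid V G) (e : V) : Set G :=
  {γ ∈ bowtieStar S e | S.r γ = e}

private lemma im_inv_unique {M : Type*} [InverseMonoid M] (a b c : M)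
    (h1 : a * b * a = a) (h2 : b * a * b = b) (h3 : a * c * a = a) (h4 : c * a * c = c) :
    b = c := by
  have hba : (b * a) * (b * a) = b * a := by rw [← mul_assoc (b*a) b a, h2]
  have hca : (c * a) * (c * a) = c * a := by rw [← mul_assoc (c*a) c a, h4]
  have hab : (a * b) * (a * b) = a * b := by rw [← mul_assoc (a*b) a b, h1]
  have hac : (a * c) * (a * c) = a * c := by rw [← mul_assoc (a*c) a c, h3]
  have comm := InverseMonoid.idem_comm (b*a) (c*a) hba hca
  have comm2 := InverseMonoid.idem_comm (a*b) (a*c) hab hac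
  have hb : b = (c * a) * b := by
    calc b = (b*a)*b := h2.symm
    _ = (b*(a*c*a))*b := by rw [h3]
    _ = ((b*a)*(c*a))*b := by
        rw [← mul_assoc b (a*c) a, ← mul_assoc b a c, mul_assoc (b*a) c a]
    _ = ((c*a)*(b*a))*b := by rw [comm]
    _ = (c*a)*((b*a)*b) := by rw [mul_assoc]
    _ = (c*a)*b := by rw [h2]
  have hc : c = (c * a) * b := by
    calc c = (c*a)*c := h4.symm
    _ = (c*(a*b*a))*c := by rw [h1]
    _ = (c*((a*b)*(a*c))) := by
        rw [← mul_assoc c (a*b) a, mul_assoc (c*(a*b)) a c, mul_assoc c (a*b) (a*c)]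
    _ = (c*((a*c)*(a*b))) := by rw [comm2]
    _ = (c*(a*c))*(a*b) := by rw [← mul_assoc c (a*c) (a*b)]
    _ = ((c*a)*c)*(a*b) := by rw [← mul_assoc c a c]
    _ = c*(a*b) := by rw [h4]
    _ = (c*a)*b := by rw [← mul_assoc]
  exact hb.trans hc.symm

private lemma sg_inv_eq {V : Type*} [Monoid V] {Γ : Type*} (S : SemiregularGroupoid V Γ)
    (α δ : Γ) (h1 : S.r α = S.d δ) (h2 : S.comp α δ = S.id (S.d α)) : δ = S.inv α := by
  calc δ = S.comp (S.id (S.d δ)) δ := (S.id_comp δ).symm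
  _ = S.comp (S.id (S.r α)) δ := by rw [h1]
  _ = S.comp (S.comp (S.inv α) α) δ := by rw [S.inv_comp]
  _ = S.comp (S.inv α) (S.comp α δ) := S.comp_assoc _ _ _ (S.r_inv α) h1
  _ = S.comp (S.inv α) (S.id (S.r (S.inv α))) := by rw [h2, S.r_inv]
  _ = S.inv α := S.comp_id _

private lemma sg_inv_actL {V : Type*} [Monoid V] {Γ : Type*} (S : SemiregularGroupoid V Γ)
    (x : V) (γ : Γ) : S.inv (S.actL x γ) = S.actL x (S.inv γ) := by
  refine (sg_inv_eq S _ _ ?_ ?_).symm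
  · rw [S.r_actL, S.d_actL, S.d_inv]
  · rw [← S.actL_comp x γ (S.inv γ) (S.d_inv γ).symm, S.comp_inv, S.actL_id, S.d_actL]

private lemma sg_inv_actR {V : Type*} [Monoid V] {Γ : Type*} (S : SemiregularGroupoid V Γ)
    (γ : Γ) (x : V) : S.inv (S.actR γ x) = S.actR (S.inv γ) x := by
  refine (sg_inv_eq S _ _ ?_ ?_).symm
  · rw [S.r_actR, S.d_actR, S.d_inv]
  · rw [← S.actR_comp γ (S.inv γ) x (S.d_inv γ).symm, S.comp_inv, S.actR_id, S.d_actR]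

/-- in the pseudoregular fundamental groupoid `π(Sq(P),T)` of the Squier
complex, for each idempotent `e` of `T` the set `star_e^⋈ = {e ▷ α ◁ e : αd = e}` is a
group under `∗` with identity `1_e`, the inverse of `α` being
`(αr)⁻¹ ▷ α° ◁ (αd)⁻¹`.  The hypothesis `hK` records that the vertex set of the
component of `e` is the group `K_e = {a ∈ T : aψ = e}` with identity `e`: the range of
any arrow starting at `e` is a group element over `e`. -/
theorem stmt16 {T : Type*} [InverseMonoid T] {Γ : Type*}
    (S : SemiregularGroupoid T Γ) (e : T) (he : e * e = e)
    (hK : ∀ γ : Γ, S.d γ = e →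
      S.r γ * (S.r γ)⁻¹ = e ∧ (S.r γ)⁻¹ * S.r γ = e) :
    (S.id e ∈ bowtieStar S e) ∧
    (∀ α ∈ bowtieStar S e, ∀ β ∈ bowtieStar S e, S.star α β ∈ bowtieStar S e) ∧
    (∀ α ∈ bowtieStar S e, ∀ β ∈ bowtieStar S e, ∀ γ ∈ bowtieStar S e,
      S.star (S.star α β) γ = S.star α (S.star β γ)) ∧
    (∀ α ∈ bowtieStar S e, S.star (S.id e) α = α ∧ S.star α (S.id e) = α) ∧
    (∀ α ∈ bowtieStar S e,
      S.actL (S.r α)⁻¹ (S.actR (S.inv α) (S.d α)⁻¹) ∈ bowtieStar S e ∧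
      S.star α (S.actL (S.r α)⁻¹ (S.actR (S.inv α) (S.d α)⁻¹)) = S.id e ∧
      S.star (S.actL (S.r α)⁻¹ (S.actR (S.inv α) (S.d α)⁻¹)) α = S.id e) := by
  have einv : (e : T)⁻¹ = e :=
    im_inv_unique e e⁻¹ e (InverseMonoid.mul_inv_mul e) (InverseMonoid.inv_mul_inv e)
      (by rw [he, he]) (by rw [he, he])
  have memd : ∀ γ ∈ bowtieStar S e, S.d γ = e := by
    rintro γ ⟨α, hα, rfl⟩
    rw [S.d_actL, S.d_actR, hα, he, he]
  have memfixR : ∀ γ ∈ bowtieStar S e, S.actR γ e = γ := by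
    rintro γ ⟨α, hα, rfl⟩
    rw [S.actL_actR, ← S.actR_mul, he]
  have memfixL : ∀ γ ∈ bowtieStar S e, S.actL e γ = γ := by
    rintro γ ⟨α, hα, rfl⟩
    rw [← S.actL_mul, he]
  have memof : ∀ γ : Γ, S.d γ = e → S.actR γ e = γ → S.actL e γ = γ → γ ∈ bowtieStar S e :=
    fun γ hd hR hL => ⟨γ, hd, by rw [hR, hL]⟩
  have hKm : ∀ γ ∈ bowtieStar S e, S.r γ * (S.r γ)⁻¹ = e ∧ (S.r γ)⁻¹ * S.r γ = e :=
    fun γ hγ => hK γ (memd γ hγ)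
  have her : ∀ γ ∈ bowtieStar S e, e * S.r γ = S.r γ := by
    intro γ hγ
    rw [← (hKm γ hγ).1, InverseMonoid.mul_inv_mul]
  have hre : ∀ γ ∈ bowtieStar S e, S.r γ * e = S.r γ := by
    intro γ hγ
    rw [← (hKm γ hγ).2, ← mul_assoc, InverseMonoid.mul_inv_mul]
  have heri : ∀ γ ∈ bowtieStar S e, e * (S.r γ)⁻¹ = (S.r γ)⁻¹ := by
    intro γ hγ
    rw [← (hKm γ hγ).2, InverseMonoid.inv_mul_inv]
  have hrie : ∀ γ ∈ bowtieStar S e, (S.r γ)⁻¹ * e = (S.r γ)⁻¹ := by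
    intro γ hγ
    rw [← (hKm γ hγ).1, ← mul_assoc, InverseMonoid.inv_mul_inv]
  have hc : ∀ α β : Γ, S.r (S.actR α (S.d β)) = S.d (S.actL (S.r α) β) := by
    intro α β; rw [S.r_actR, S.d_actL]
  have star_d : ∀ α β : Γ, S.d (S.star α β) = S.d α * S.d β := by
    intro α β
    simp only [SemiregularGroupoid.star]
    rw [S.d_comp _ _ (hc α β), S.d_actR]
  have hid : S.id e ∈ bowtieStar S e :=
    ⟨S.id e, S.d_id e, by rw [S.actR_id, he, S.actL_id, he]⟩
  have hclosed : ∀ α ∈ bowtieStar S e, ∀ β ∈ bowtieStar S e,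
      S.star α β ∈ bowtieStar S e := by
    intro α hα β hβ
    refine memof _ ?_ ?_ ?_
    · rw [star_d, memd α hα, memd β hβ, he]
    · simp only [SemiregularGroupoid.star]
      rw [S.actR_comp _ _ _ (hc α β), ← S.actR_mul, S.actL_actR, memfixR β hβ,
        memd β hβ, he]
    · simp only [SemiregularGroupoid.star]
      rw [S.actL_comp _ _ _ (hc α β), ← S.actL_mul, ← S.actL_actR, memfixL α hα,
        her α hα]
  have hassoc : ∀ α ∈ bowtieStar S e, ∀ β ∈ bowtieStar S e, ∀ γ ∈ bowtieStar S e,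
      S.star (S.star α β) γ = S.star α (S.star β γ) := by
    intro α hα β hβ γ hγ
    have hdβ := memd β hβ
    have hdγ := memd γ hγ
    have hfix2 : S.actR (S.comp (S.actR α e) (S.actL (S.r α) β)) e
        = S.comp (S.actR α e) (S.actL (S.r α) β) := by
      have h := memfixR _ (hclosed α hα β hβ)
      simp only [SemiregularGroupoid.star, hdβ] at h
      exact h
    have c1' : S.r (S.actR α e) = S.d (S.actL (S.r α) β) := by
      rw [S.r_actR, S.d_actL, hdβ]
    have c2' : S.r (S.actL (S.r α) β) = S.d (S.actL (S.r α * S.r β) γ) := by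
      rw [S.r_actL, S.d_actL, hdγ, mul_assoc, hre β hβ]
    have c3 : S.r β = S.d (S.actL (S.r β) γ) := by
      rw [S.d_actL, hdγ, hre β hβ]
    simp only [SemiregularGroupoid.star]
    rw [S.d_comp _ _ (hc β γ), S.d_actR, S.r_comp _ _ (hc α β), S.r_actL, hdβ, hdγ,
      he, memfixR β hβ, hfix2, S.comp_assoc _ _ _ c1' c2',
      S.actL_mul (S.r α) (S.r β) γ, ← S.actL_comp (S.r α) β (S.actL (S.r β) γ) c3]
  have hident : ∀ α ∈ bowtieStar S e, S.star (S.id e) α = α ∧ S.star α (S.id e) = α := by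
    intro α hα
    have hdα := memd α hα
    constructor
    · simp only [SemiregularGroupoid.star]
      rw [hdα, S.actR_id, he, S.r_id, memfixL α hα]
      have h := S.id_comp α
      rwa [hdα] at h
    · simp only [SemiregularGroupoid.star]
      rw [S.d_id, memfixR α hα, S.actL_id, hre α hα]
      exact S.comp_id α
  have hinv : ∀ α ∈ bowtieStar S e,
      S.actL (S.r α)⁻¹ (S.actR (S.inv α) (S.d α)⁻¹) ∈ bowtieStar S e ∧
      S.star α (S.actL (S.r α)⁻¹ (S.actR (S.inv α) (S.d α)⁻¹)) = S.id e ∧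
      S.star (S.actL (S.r α)⁻¹ (S.actR (S.inv α) (S.d α)⁻¹)) α = S.id e := by
    intro α hα
    have hdα := memd α hα
    have hinvR : S.actR (S.inv α) e = S.inv α := by
      rw [← sg_inv_actR, memfixR α hα]
    have hinvL : S.actL e (S.inv α) = S.inv α := by
      rw [← sg_inv_actL, memfixL α hα]
    have hβ : S.actL (S.r α)⁻¹ (S.actR (S.inv α) (S.d α)⁻¹)
        = S.actL (S.r α)⁻¹ (S.inv α) := by
      rw [hdα, einv, hinvR]
    rw [hβ]
    refine ⟨memof _ ?_ ?_ ?_, ?_, ?_⟩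
    · rw [S.d_actL, S.d_inv, (hKm α hα).2]
    · rw [S.actL_actR, hinvR]
    · rw [← S.actL_mul, heri α hα]
    · simp only [SemiregularGroupoid.star]
      rw [S.d_actL, S.d_inv, (hKm α hα).2, memfixR α hα, ← S.actL_mul,
        (hKm α hα).1, hinvL, S.comp_inv, hdα]
    · simp only [SemiregularGroupoid.star]
      rw [hdα, S.actL_actR, hinvR, S.r_actL, S.r_inv, hdα, hrie α hα,
        ← S.actL_comp _ _ _ (S.r_inv α), S.inv_comp, S.actL_id, (hKm α hα).2]
  exact ⟨hid, hclosed, hassoc, hident, hinv⟩
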